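/- arXiv:2009.03493 — 6 statements merged into one kernel-verified Lean document; each statement's English description precedes it below -/
import Mathlib

section
/- Let x₁, …, xₙ be a basis of ℝⁿ which is α-reduced for some 1/4 < α < 1, and let x₁*, …, xₙ* be its Gram–Schmidt orthogonalization. Then for all indices 1 ≤ k ≤ j ≤ n, one has ‖x_k‖² ≤ (4/(4α − 1))^{j−1} · ‖x_j*‖². -/
/-- Property (i) of LLL-reduced bases: if `x₁, …, xₙ` is an α-reduced basis of
ℝⁿ with Gram–Schmidt orthogonalization `x₁*, …, xₙ*`, then
`‖x k‖² ≤ (4/(4α-1))^(j-1) ‖x j*‖²` for all `k ≤ j`.  (Zero-based indexing: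
the exponent `j - 1` of the 1-based statement becomes `(j : ℕ)`.) -/
theorem statement5 (n : ℕ) (α : ℝ) (hα : 1 / 4 < α) (hα1 : α < 1)
    (x : Fin n → EuclideanSpace ℝ (Fin n))
    (hx_indep : LinearIndependent ℝ x)
    (hx_span : Submodule.span ℝ (Set.range x) = ⊤)
    (xstar : Fin n → EuclideanSpace ℝ (Fin n))
    (μ : Fin n → Fin n → ℝ)
    (hμ : ∀ j k : Fin n, μ j k = (inner ℝ (x j) (xstar k) : ℝ) / ‖xstar k‖ ^ 2)
    (hgs : ∀ j : Fin n,
      xstar j = x j - ∑ k ∈ Finset.univ.filter (· < j), μ j k • xstar k)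
    (hred1 : ∀ j k : Fin n, k < j → |μ j k| ≤ 1 / 2)
    (hred2 : ∀ i j : Fin n, (i : ℕ) + 1 = (j : ℕ) →
      α * ‖xstar i‖ ^ 2 ≤ ‖xstar j + μ j i • xstar i‖ ^ 2) :
    ∀ k j : Fin n, k ≤ j →
      ‖x k‖ ^ 2 ≤ (4 / (4 * α - 1)) ^ (j : ℕ) * ‖xstar j‖ ^ 2 := by
  set β : ℝ := 4 / (4 * α - 1) with hβdef
  have h41 : 0 < 4 * α - 1 := by linarith
  have hβ43 : (4 : ℝ) / 3 ≤ β := by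
    rw [hβdef, div_le_div_iff₀ (by norm_num) h41]; linarith
  have hβpos : 0 < β := by linarith
  have hβ1 : (1 : ℝ) ≤ β := by linarith
  -- orthogonality
  have orthAux : ∀ m : ℕ, ∀ j k : Fin n, (j : ℕ) = m → k < j →
      (inner ℝ (xstar k) (xstar j) : ℝ) = 0 := by
    intro m
    induction m using Nat.strong_induction_on with
    | _ m ih =>
      intro j k hj hk
      by_cases h0 : xstar k = 0
      · simp [h0]
      · rw [hgs j, inner_sub_right, inner_sum]
        have hkmem : k ∈ Finset.univ.filter (· < j) := by
          simp [Finset.mem_filter, hk]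
        rw [Finset.sum_eq_single_of_mem k hkmem ?_]
        · rw [real_inner_smul_right, hμ, real_inner_self_eq_norm_sq]
          have hn : ‖xstar k‖ ≠ 0 := norm_ne_zero_iff.mpr h0
          rw [div_mul_cancel₀ _ (pow_ne_zero 2 hn), real_inner_comm, sub_self]
        · intro i hi hik
          have hilt : i < j := by simpa using hi
          rw [real_inner_smul_right]
          rcases lt_or_gt_of_ne hik with h | h
          · rw [real_inner_comm,
              ih (k : ℕ) (by omega : (k : ℕ) < m) k i rfl h, mul_zero]
          · rw [ih (i : ℕ) (by omega : (i : ℕ) < m) i k rfl h, mul_zero]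
  have orth : ∀ j k : Fin n, k < j → (inner ℝ (xstar k) (xstar j) : ℝ) = 0 :=
    fun j k h => orthAux (j : ℕ) j k rfl h
  -- one-step bound
  have step : ∀ i j : Fin n, (i : ℕ) + 1 = (j : ℕ) →
      ‖xstar i‖ ^ 2 ≤ β * ‖xstar j‖ ^ 2 := by
    intro i j hij
    have hlt : i < j := by rw [Fin.lt_def]; omega
    have h2 := hred2 i j hij
    have ho : (inner ℝ (xstar i) (xstar j) : ℝ) = 0 := orth j i hlt
    have hexp : ‖xstar j + μ j i • xstar i‖ ^ 2
        = ‖xstar j‖ ^ 2 + (μ j i) ^ 2 * ‖xstar i‖ ^ 2 := by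
      rw [norm_add_sq_real, real_inner_smul_right, real_inner_comm, ho,
        norm_smul, mul_pow, Real.norm_eq_abs, sq_abs]
      ring
    rw [hexp] at h2
    have hμ2 : (μ j i) ^ 2 ≤ 1 / 4 := by
      have h1 := hred1 j i hlt
      nlinarith [abs_nonneg (μ j i), sq_abs (μ j i)]
    have hkey : (4 * α - 1) * ‖xstar i‖ ^ 2 ≤ 4 * ‖xstar j‖ ^ 2 := by
      nlinarith [sq_nonneg ‖xstar i‖]
    rw [hβdef, div_mul_eq_mul_div, le_div_iff₀ h41]
    nlinarith
  -- chain bound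
  have chain : ∀ d : ℕ, ∀ k j : Fin n, (k : ℕ) + d = (j : ℕ) →
      ‖xstar k‖ ^ 2 ≤ β ^ d * ‖xstar j‖ ^ 2 := by
    intro d
    induction d with
    | zero =>
      intro k j h
      have : k = j := Fin.ext (by omega)
      rw [this]; simp
    | succ d ih =>
      intro k j h
      have hlt : (k : ℕ) + d < n := by omega
      set i : Fin n := ⟨(k : ℕ) + d, hlt⟩ with hi
      have h1 : ‖xstar k‖ ^ 2 ≤ β ^ d * ‖xstar i‖ ^ 2 := ih k i rfl
      have h2 : ‖xstar i‖ ^ 2 ≤ β * ‖xstar j‖ ^ 2 := step i j (by simp [hi]; omega)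
      calc ‖xstar k‖ ^ 2 ≤ β ^ d * ‖xstar i‖ ^ 2 := h1
        _ ≤ β ^ d * (β * ‖xstar j‖ ^ 2) := by
            exact mul_le_mul_of_nonneg_left h2 (pow_nonneg hβpos.le d)
        _ = β ^ (d + 1) * ‖xstar j‖ ^ 2 := by ring
  -- Pythagoras
  have pyth : ∀ k : Fin n, ‖x k‖ ^ 2 = ‖xstar k‖ ^ 2
      + ∑ i ∈ Finset.univ.filter (· < k), (μ k i) ^ 2 * ‖xstar i‖ ^ 2 := by
    intro k
    have hx : x k = xstar k + ∑ i ∈ Finset.univ.filter (· < k), μ k i • xstar i := by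
      rw [hgs k, sub_add_cancel]
    rw [hx, norm_add_sq_real]
    have hcross : (inner ℝ (xstar k)
        (∑ i ∈ Finset.univ.filter (· < k), μ k i • xstar i) : ℝ) = 0 := by
      rw [inner_sum]
      apply Finset.sum_eq_zero
      intro i hi
      have hik : i < k := by simpa using hi
      rw [real_inner_smul_right, real_inner_comm, orth k i hik, mul_zero]
    have hS : ‖∑ i ∈ Finset.univ.filter (· < k), μ k i • xstar i‖ ^ 2
        = ∑ i ∈ Finset.univ.filter (· < k), (μ k i) ^ 2 * ‖xstar i‖ ^ 2 := by
      rw [← real_inner_self_eq_norm_sq, inner_sum]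
      apply Finset.sum_congr rfl
      intro i hi
      rw [real_inner_smul_right, sum_inner]
      rw [Finset.sum_eq_single_of_mem i hi ?_]
      · rw [real_inner_smul_left, real_inner_self_eq_norm_sq]; ring
      · intro b hb hbi
        have hblt : b < k := by simpa using hb
        have hilt : i < k := by simpa using hi
        rw [real_inner_smul_left]
        rcases lt_or_gt_of_ne hbi with h | h
        · rw [orth i b h, mul_zero]
        · rw [real_inner_comm, orth b i h, mul_zero]
    rw [hcross, hS]; ring
  -- geometric claim
  have geo : ∀ N : ℕ, 1 + (1 / 4) * ∑ m ∈ Finset.range N, β ^ (m + 1) ≤ β ^ N := by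
    intro N
    induction N with
    | zero => simp
    | succ N ih =>
      rw [Finset.sum_range_succ]
      have hpow : (0 : ℝ) < β ^ N := pow_pos hβpos N
      have : β ^ (N + 1) = β * β ^ N := by ring
      nlinarith
  -- sum conversion
  have sum_conv : ∀ (k : Fin n) (g : ℕ → ℝ),
      ∑ i ∈ Finset.univ.filter (· < k), g (i : ℕ) = ∑ m ∈ Finset.range (k : ℕ), g m := by
    intro k g
    rw [Finset.sum_filter]
    have h1 : ∀ i : Fin n, (if i < k then g (i : ℕ) else 0)
        = (fun m => if m < (k : ℕ) then g m else 0) (i : ℕ) := by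
      intro i; simp only [Fin.lt_def]
    simp_rw [h1]
    rw [Fin.sum_univ_eq_sum_range (fun m => if m < (k : ℕ) then g m else 0) n]
    rw [← Finset.sum_filter]
    congr 1
    ext m
    simp only [Finset.mem_filter, Finset.mem_range]
    omega
  -- main bound : ‖x k‖² ≤ β^k ‖xstar k‖²
  have main : ∀ k : Fin n, ‖x k‖ ^ 2 ≤ β ^ (k : ℕ) * ‖xstar k‖ ^ 2 := by
    intro k
    rw [pyth k]
    have hterm : ∀ i ∈ Finset.univ.filter (· < k),
        (μ k i) ^ 2 * ‖xstar i‖ ^ 2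
          ≤ (1 / 4) * (β ^ ((k : ℕ) - (i : ℕ)) * ‖xstar k‖ ^ 2) := by
      intro i hi
      have hik : i < k := by simpa using hi
      have hμ2 : (μ k i) ^ 2 ≤ 1 / 4 := by
        have h1 := hred1 k i hik
        nlinarith [abs_nonneg (μ k i), sq_abs (μ k i)]
      have hc : ‖xstar i‖ ^ 2 ≤ β ^ ((k : ℕ) - (i : ℕ)) * ‖xstar k‖ ^ 2 := by
        apply chain ((k : ℕ) - (i : ℕ)) i k
        have := hik
        rw [Fin.lt_def] at this
        omega
      exact mul_le_mul hμ2 hc (sq_nonneg _) (by norm_num)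
    have hsum := Finset.sum_le_sum hterm
    have hconv : ∑ i ∈ Finset.univ.filter (· < k),
        (1 / 4) * (β ^ ((k : ℕ) - (i : ℕ)) * ‖xstar k‖ ^ 2)
        = (∑ m ∈ Finset.range (k : ℕ), (1 / 4) * β ^ ((k : ℕ) - m)) * ‖xstar k‖ ^ 2 := by
      rw [sum_conv k (fun m => (1 / 4) * (β ^ ((k : ℕ) - m) * ‖xstar k‖ ^ 2)),
        Finset.sum_mul]
      apply Finset.sum_congr rfl
      intro m hm
      ring
    have hrefl : ∑ m ∈ Finset.range (k : ℕ), (1 / 4) * β ^ ((k : ℕ) - m)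
        = (1 / 4) * ∑ m ∈ Finset.range (k : ℕ), β ^ (m + 1) := by
      rw [Finset.mul_sum]
      rw [← Finset.sum_range_reflect (fun m => (1 / 4) * β ^ (m + 1)) (k : ℕ)]
      apply Finset.sum_congr rfl
      intro m hm
      simp only [Finset.mem_range] at hm
      congr 2
      omega
    have hgeo := geo (k : ℕ)
    calc ‖xstar k‖ ^ 2 + ∑ i ∈ Finset.univ.filter (· < k), (μ k i) ^ 2 * ‖xstar i‖ ^ 2
        ≤ ‖xstar k‖ ^ 2
          + (∑ m ∈ Finset.range (k : ℕ), (1 / 4) * β ^ ((k : ℕ) - m)) * ‖xstar k‖ ^ 2 := by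
          rw [← hconv]; linarith
      _ = (1 + (1 / 4) * ∑ m ∈ Finset.range (k : ℕ), β ^ (m + 1)) * ‖xstar k‖ ^ 2 := by
          rw [hrefl]; ring
      _ ≤ β ^ (k : ℕ) * ‖xstar k‖ ^ 2 :=
          mul_le_mul_of_nonneg_right hgeo (sq_nonneg _)
  -- conclude
  intro k j hkj
  have hkj' : (k : ℕ) ≤ (j : ℕ) := hkj
  have hchain : ‖xstar k‖ ^ 2 ≤ β ^ ((j : ℕ) - (k : ℕ)) * ‖xstar j‖ ^ 2 :=
    chain _ k j (by omega)
  calc ‖x k‖ ^ 2 ≤ β ^ (k : ℕ) * ‖xstar k‖ ^ 2 := main k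
    _ ≤ β ^ (k : ℕ) * (β ^ ((j : ℕ) - (k : ℕ)) * ‖xstar j‖ ^ 2) :=
        mul_le_mul_of_nonneg_left hchain (pow_nonneg hβpos.le _)
    _ = β ^ ((k : ℕ) + ((j : ℕ) - (k : ℕ))) * ‖xstar j‖ ^ 2 := by
        rw [pow_add]; ring
    _ = β ^ (j : ℕ) * ‖xstar j‖ ^ 2 := by
        congr 2
        omega
end

section
/- Let x₁, …, xₙ be a basis of ℝⁿ which is α-reduced for some 1/4 < α < 1, and let L be the lattice it generates, with determinant d(L) equal to the absolute value of the determinant of the matrix whose rows are x₁, …, xₙ. Then d(L) ≤ ∏_{j=1}^n ‖x_j‖ ≤ (4/(4α − 1))^{n(n−1)/4} · d(L). -/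
open Finset Matrix RealInnerProductSpace

private lemma geom_bound_aux {β : ℝ} (hβ : 4/3 ≤ β) :
    ∀ J : ℕ, 1 + (1/4) * ∑ m ∈ Finset.range J, β ^ (J - m) ≤ β ^ J := by
  have hβ0 : 0 < β := by linarith
  intro J
  induction J with
  | zero => simp
  | succ J ih =>
    have hs : ∑ m ∈ Finset.range (J+1), β ^ (J + 1 - m)
        = β * ∑ m ∈ Finset.range J, β ^ (J - m) + β := by
      rw [Finset.sum_range_succ]
      have : ∀ m ∈ Finset.range J, β ^ (J + 1 - m) = β * β ^ (J - m) := by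
        intro m hm
        rw [Finset.mem_range] at hm
        have : J + 1 - m = (J - m) + 1 := by omega
        rw [this, pow_succ]; ring
      rw [Finset.sum_congr rfl this, ← Finset.mul_sum]
      simp
    rw [hs]
    have h1 : β * ∑ m ∈ Finset.range J, β ^ (J - m) ≤ β * (4 * (β ^ J - 1)) := by
      apply mul_le_mul_of_nonneg_left _ (le_of_lt hβ0)
      linarith
    have h2 : (0:ℝ) < β ^ J := pow_pos hβ0 J
    rw [pow_succ]
    nlinarith

set_option maxHeartbeats 2000000 in
/-- Property (ii) of LLL-reduced bases: if `x₁, …, xₙ` is an α-reduced basis of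
ℝⁿ generating a lattice `L` with determinant `d(L) = |det X|` (rows `x j`), then
`d(L) ≤ ∏ ‖x j‖ ≤ (4/(4α-1))^(n(n-1)/4) d(L)`. -/
theorem statement6 (n : ℕ) (α : ℝ) (hα : 1 / 4 < α) (hα1 : α < 1)
    (x : Fin n → EuclideanSpace ℝ (Fin n))
    (hx_indep : LinearIndependent ℝ x)
    (hx_span : Submodule.span ℝ (Set.range x) = ⊤)
    (xstar : Fin n → EuclideanSpace ℝ (Fin n))
    (μ : Fin n → Fin n → ℝ)
    (hμ : ∀ j k : Fin n, μ j k = (inner ℝ (x j) (xstar k) : ℝ) / ‖xstar k‖ ^ 2)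
    (hgs : ∀ j : Fin n,
      xstar j = x j - ∑ k ∈ Finset.univ.filter (· < j), μ j k • xstar k)
    (hred1 : ∀ j k : Fin n, k < j → |μ j k| ≤ 1 / 2)
    (hred2 : ∀ i j : Fin n, (i : ℕ) + 1 = (j : ℕ) →
      α * ‖xstar i‖ ^ 2 ≤ ‖xstar j + μ j i • xstar i‖ ^ 2) :
    |(Matrix.of fun j i => x j i).det| ≤ ∏ j, ‖x j‖ ∧
    ∏ j, ‖x j‖ ≤ (4 / (4 * α - 1)) ^ (((n : ℝ) * ((n : ℝ) - 1)) / 4) *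
      |(Matrix.of fun j i => x j i).det| := by
  set β : ℝ := 4 / (4 * α - 1) with hβdef
  have hden : (0:ℝ) < 4 * α - 1 := by linarith
  have hβ43 : 4/3 < β := by
    rw [hβdef, lt_div_iff₀ hden]; linarith
  have hβ0 : (0:ℝ) < β := by linarith
  -- the inner product of x j with xstar k
  have hinner_x : ∀ j k : Fin n, μ j k * ‖xstar k‖ ^ 2 = ⟪x j, xstar k⟫ := by
    intro j k
    by_cases h : xstar k = 0
    · simp [hμ j k, h]
    · rw [hμ j k, div_mul_cancel₀]
      exact pow_ne_zero 2 (norm_ne_zero_iff.mpr h)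
  -- orthogonality of the Gram-Schmidt vectors
  have horthN : ∀ N : ℕ, ∀ j k : Fin n, (j:ℕ) ≤ N → k < j → ⟪xstar j, xstar k⟫ = 0 := by
    intro N
    induction N with
    | zero =>
      intro j k hj hk
      exact absurd (Fin.lt_def.mp hk) (by omega)
    | succ N ih =>
      intro j k hj hk
      by_cases hjN : (j:ℕ) ≤ N
      · exact ih j k hjN hk
      · have hpair : ∀ a b : Fin n, (a:ℕ) ≤ N → (b:ℕ) ≤ N → a ≠ b →
            ⟪xstar a, xstar b⟫ = 0 := by
          intro a b ha hb hab
          rcases lt_or_gt_of_ne hab with h | h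
          · rw [real_inner_comm]; exact ih b a hb h
          · exact ih a b ha h
        have hkj := Fin.lt_def.mp hk
        have hkmem : k ∈ Finset.univ.filter (· < j) := by
          simp [hk]
        rw [hgs j, inner_sub_left, sum_inner]
        have hsum : ∑ m ∈ Finset.univ.filter (· < j), ⟪μ j m • xstar m, xstar k⟫
            = μ j k * ‖xstar k‖ ^ 2 := by
          rw [Finset.sum_eq_single_of_mem k hkmem]
          · rw [real_inner_smul_left, real_inner_self_eq_norm_sq]
          · intro m hm hmk
            rw [Finset.mem_filter] at hm
            have hmN : (m:ℕ) ≤ N := by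
              have := Fin.lt_def.mp hm.2; omega
            have hkN : (k:ℕ) ≤ N := by omega
            rw [real_inner_smul_left, hpair m k hmN hkN hmk, mul_zero]
        rw [hsum, ← hinner_x, sub_self]
  have horth : ∀ j k : Fin n, j ≠ k → ⟪xstar j, xstar k⟫ = 0 := by
    intro j k hjk
    rcases lt_or_gt_of_ne hjk with h | h
    · rw [real_inner_comm]; exact horthN n k j (le_of_lt k.isLt) h
    · exact horthN n j k (le_of_lt j.isLt) h
  -- decomposition of x j
  have hx_decomp : ∀ j : Fin n,
      x j = xstar j + ∑ k ∈ Finset.univ.filter (· < j), μ j k • xstar k := by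
    intro j
    rw [hgs j]; abel
  -- inner of xstar j with the correction sum
  have hinner_sum : ∀ j : Fin n,
      ⟪xstar j, ∑ k ∈ Finset.univ.filter (· < j), μ j k • xstar k⟫ = 0 := by
    intro j
    rw [inner_sum]
    apply Finset.sum_eq_zero
    intro k hk
    rw [Finset.mem_filter] at hk
    rw [real_inner_smul_right, horth j k (ne_of_gt hk.2), mul_zero]
  -- norm of the correction sum
  have hSnorm : ∀ j : Fin n,
      ‖∑ k ∈ Finset.univ.filter (· < j), μ j k • xstar k‖ ^ 2
        = ∑ k ∈ Finset.univ.filter (· < j), (μ j k) ^ 2 * ‖xstar k‖ ^ 2 := by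
    intro j
    rw [← real_inner_self_eq_norm_sq, sum_inner]
    apply Finset.sum_congr rfl
    intro k hk
    rw [Finset.mem_filter] at hk
    rw [real_inner_smul_left, inner_sum,
      Finset.sum_eq_single_of_mem k (by simp [hk.2])]
    · rw [real_inner_smul_right, real_inner_self_eq_norm_sq]; ring
    · intro m hm hmk
      rw [real_inner_smul_right, horth k m (Ne.symm hmk), mul_zero]
  -- Pythagoras
  have hxnormsq : ∀ j : Fin n, ‖x j‖ ^ 2
      = ‖xstar j‖ ^ 2 + ∑ k ∈ Finset.univ.filter (· < j), (μ j k) ^ 2 * ‖xstar k‖ ^ 2 := by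
    intro j
    rw [hx_decomp j, ← real_inner_self_eq_norm_sq, real_inner_add_add_self,
      hinner_sum j, real_inner_self_eq_norm_sq, real_inner_self_eq_norm_sq, hSnorm j]
    ring
  -- matrices
  set X : Matrix (Fin n) (Fin n) ℝ := Matrix.of fun j i => x j i with hXdef
  set Xs : Matrix (Fin n) (Fin n) ℝ := Matrix.of fun j i => xstar j i with hXsdef
  set M : Matrix (Fin n) (Fin n) ℝ :=
    Matrix.of fun j k => if k = j then 1 else if k < j then μ j k else 0 with hMdef
  have hXM : X = M * Xs := by
    ext j i
    rw [Matrix.mul_apply]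
    have happ : x j i = xstar j i
        + ∑ k ∈ Finset.univ.filter (· < j), μ j k * xstar k i := by
      have h := congrArg (fun v => EuclideanSpace.projₗ (𝕜 := ℝ) i v) (hx_decomp j)
      simp only [map_add, map_sum, _root_.map_smul, smul_eq_mul] at h
      simpa using h
    show x j i = _
    have hterm : ∀ k : Fin n, M j k * Xs k i
        = (if k = j then xstar j i else 0) + (if k < j then μ j k * xstar k i else 0) := by
      intro k
      show (if k = j then (1:ℝ) else if k < j then μ j k else 0) * xstar k i = _
      by_cases h1 : k = j
      · subst h1; simp [lt_irrefl]
      · rw [if_neg h1, if_neg h1, zero_add]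
        by_cases h2 : k < j
        · rw [if_pos h2, if_pos h2]
        · rw [if_neg h2, if_neg h2, zero_mul]
    rw [Finset.sum_congr rfl (fun k _ => hterm k), Finset.sum_add_distrib,
      Finset.sum_ite_eq' Finset.univ j (fun _ => xstar j i), ← Finset.sum_filter]
    simpa using happ
  have hMtri : ∀ i j : Fin n, i < j → M i j = 0 := by
    intro i j h
    show (if j = i then (1:ℝ) else if j < i then μ i j else 0) = 0
    rw [if_neg (ne_of_gt h), if_neg (asymm h)]
  have hMdet1 : M.det = 1 := by
    rw [Matrix.det_of_lowerTriangular M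
      (fun i j hij => hMtri i j (OrderDual.toDual_lt_toDual.mp hij))]
    simp [M]
  have hdetX : X.det = Xs.det := by rw [hXM, Matrix.det_mul, hMdet1, one_mul]
  -- Gram matrix
  have hGram : Xs * Xsᵀ = Matrix.diagonal (fun j => ‖xstar j‖ ^ 2) := by
    ext j k
    rw [Matrix.mul_apply]
    have hin : ∑ i, Xs j i * Xsᵀ i k = ⟪xstar j, xstar k⟫ := by
      rw [PiLp.inner_apply]
      apply Finset.sum_congr rfl
      intro i _
      simp [Xs, RCLike.inner_apply, Matrix.transpose_apply, mul_comm]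
    rw [hin]
    by_cases h : j = k
    · subst h
      rw [Matrix.diagonal_apply_eq, real_inner_self_eq_norm_sq]
    · rw [Matrix.diagonal_apply_ne _ h, horth j k h]
  have hdetXs : |Xs.det| = ∏ j, ‖xstar j‖ := by
    have h1 : Xs.det * Xs.det = ∏ j, ‖xstar j‖ ^ 2 := by
      have := congrArg Matrix.det hGram
      rwa [Matrix.det_mul, Matrix.det_transpose, Matrix.det_diagonal] at this
    have h2 : |Xs.det| ^ 2 = (∏ j, ‖xstar j‖) ^ 2 := by
      rw [sq_abs, sq, h1, ← Finset.prod_pow]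
    have h3 : (0:ℝ) ≤ |Xs.det| := abs_nonneg _
    have h4 : (0:ℝ) ≤ ∏ j, ‖xstar j‖ := Finset.prod_nonneg (fun j _ => norm_nonneg _)
    nlinarith
  have hdetabs : |X.det| = ∏ j, ‖xstar j‖ := by rw [hdetX, hdetXs]
  -- first inequality
  have hstar_le : ∀ j : Fin n, ‖xstar j‖ ≤ ‖x j‖ := by
    intro j
    have hsq : ‖xstar j‖ ^ 2 ≤ ‖x j‖ ^ 2 := by
      rw [hxnormsq j]
      have : (0:ℝ) ≤ ∑ k ∈ Finset.univ.filter (· < j), (μ j k) ^ 2 * ‖xstar k‖ ^ 2 :=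
        Finset.sum_nonneg (fun k _ => mul_nonneg (sq_nonneg _) (sq_nonneg _))
      linarith
    nlinarith [norm_nonneg (xstar j), norm_nonneg (x j)]
  have hfirst : |X.det| ≤ ∏ j, ‖x j‖ := by
    rw [hdetabs]
    exact Finset.prod_le_prod (fun j _ => norm_nonneg _) (fun j _ => hstar_le j)
  refine ⟨hfirst, ?_⟩
  -- second inequality
  -- step bound
  have hstep : ∀ i j : Fin n, (i:ℕ) + 1 = (j:ℕ) → ‖xstar i‖ ^ 2 ≤ β * ‖xstar j‖ ^ 2 := by
    intro i j hij
    have hij' : i < j := Fin.lt_def.mpr (by omega)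
    have h1 := hred2 i j hij
    have hexp : ‖xstar j + μ j i • xstar i‖ ^ 2
        = ‖xstar j‖ ^ 2 + (μ j i) ^ 2 * ‖xstar i‖ ^ 2 := by
      rw [← real_inner_self_eq_norm_sq, real_inner_add_add_self,
        real_inner_smul_right, horth j i (ne_of_gt hij'),
        real_inner_smul_left, real_inner_smul_right,
        real_inner_self_eq_norm_sq, real_inner_self_eq_norm_sq]
      ring
    have hμ2 : (μ j i) ^ 2 ≤ 1/4 := by
      have h := hred1 j i hij'
      have := abs_nonneg (μ j i)
      nlinarith [sq_abs (μ j i)]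
    rw [hexp] at h1
    have hA : (0:ℝ) ≤ ‖xstar i‖ ^ 2 := sq_nonneg _
    rw [hβdef, div_mul_eq_mul_div, le_div_iff₀ hden]
    nlinarith
  -- chain bound
  have hchain : ∀ d : ℕ, ∀ k j : Fin n, (k:ℕ) + d = (j:ℕ) →
      ‖xstar k‖ ^ 2 ≤ β ^ d * ‖xstar j‖ ^ 2 := by
    intro d
    induction d with
    | zero =>
      intro k j h
      have : k = j := Fin.ext (by omega)
      subst this; simp
    | succ d ih =>
      intro k j h
      have hin : (k:ℕ) + d < n := by have := j.isLt; omega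
      set i : Fin n := ⟨(k:ℕ) + d, hin⟩ with hidef
      have h1 : ‖xstar k‖ ^ 2 ≤ β ^ d * ‖xstar i‖ ^ 2 := ih k i rfl
      have h2 : ‖xstar i‖ ^ 2 ≤ β * ‖xstar j‖ ^ 2 := hstep i j (by simp [hidef]; omega)
      calc ‖xstar k‖ ^ 2 ≤ β ^ d * ‖xstar i‖ ^ 2 := h1
        _ ≤ β ^ d * (β * ‖xstar j‖ ^ 2) :=
            mul_le_mul_of_nonneg_left h2 (le_of_lt (pow_pos hβ0 d))
        _ = β ^ (d+1) * ‖xstar j‖ ^ 2 := by rw [pow_succ]; ring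
  -- per-index bound
  have hxj : ∀ j : Fin n, ‖x j‖ ^ 2 ≤ β ^ (j:ℕ) * ‖xstar j‖ ^ 2 := by
    intro j
    rw [hxnormsq j]
    have hterm : ∀ k ∈ Finset.univ.filter (· < j),
        (μ j k) ^ 2 * ‖xstar k‖ ^ 2
          ≤ (1/4) * (β ^ ((j:ℕ) - (k:ℕ)) * ‖xstar j‖ ^ 2) := by
      intro k hk
      rw [Finset.mem_filter] at hk
      have hklt : (k:ℕ) < (j:ℕ) := Fin.lt_def.mp hk.2
      have hμ2 : (μ j k) ^ 2 ≤ 1/4 := by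
        have h := hred1 j k hk.2
        have := abs_nonneg (μ j k)
        nlinarith [sq_abs (μ j k)]
      have hch := hchain ((j:ℕ) - (k:ℕ)) k j (by omega)
      exact mul_le_mul hμ2 hch (sq_nonneg _)
        (by norm_num)
    have hsum_le := Finset.sum_le_sum hterm
    have hfilter_sum : ∀ g : ℕ → ℝ,
        ∑ k ∈ Finset.univ.filter (· < j), g (k:ℕ) = ∑ m ∈ Finset.range (j:ℕ), g m := by
      intro g
      rw [Finset.sum_filter]
      have h1 : ∀ k : Fin n, (if k < j then g (k:ℕ) else 0)
          = (fun m => if m < (j:ℕ) then g m else 0) (k:ℕ) := by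
        intro k; simp only [Fin.lt_def]
      rw [Finset.sum_congr rfl (fun k _ => h1 k),
        Fin.sum_univ_eq_sum_range (fun m => if m < (j:ℕ) then g m else 0) n,
        ← Finset.sum_filter]
      congr 1
      ext m
      simp only [Finset.mem_filter, Finset.mem_range]
      have := j.isLt
      omega
    have hconv : ∑ k ∈ Finset.univ.filter (· < j),
        (1/4) * (β ^ ((j:ℕ) - (k:ℕ)) * ‖xstar j‖ ^ 2)
        = ((1/4) * ∑ m ∈ Finset.range (j:ℕ), β ^ ((j:ℕ) - m)) * ‖xstar j‖ ^ 2 := by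
      rw [hfilter_sum (fun m => (1/4) * (β ^ ((j:ℕ) - m) * ‖xstar j‖ ^ 2)),
        Finset.mul_sum, Finset.sum_mul]
      exact Finset.sum_congr rfl (fun m _ => by ring)
    have hgeomb := geom_bound_aux (le_of_lt hβ43) (j:ℕ)
    calc ‖xstar j‖ ^ 2 + ∑ k ∈ Finset.univ.filter (· < j), (μ j k) ^ 2 * ‖xstar k‖ ^ 2
        ≤ ‖xstar j‖ ^ 2 + ((1/4) * ∑ m ∈ Finset.range (j:ℕ), β ^ ((j:ℕ) - m)) * ‖xstar j‖ ^ 2 := by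
          rw [← hconv]; linarith
      _ = (1 + (1/4) * ∑ m ∈ Finset.range (j:ℕ), β ^ ((j:ℕ) - m)) * ‖xstar j‖ ^ 2 := by ring
      _ ≤ β ^ (j:ℕ) * ‖xstar j‖ ^ 2 :=
          mul_le_mul_of_nonneg_right hgeomb (sq_nonneg _)
  -- products
  have hP0 : (0:ℝ) ≤ ∏ j, ‖x j‖ := Finset.prod_nonneg (fun j _ => norm_nonneg _)
  have hQ0 : (0:ℝ) ≤ ∏ j, ‖xstar j‖ := Finset.prod_nonneg (fun j _ => norm_nonneg _)
  have hprodsq : (∏ j, ‖x j‖) ^ 2 ≤ β ^ (∑ j : Fin n, (j:ℕ)) * (∏ j, ‖xstar j‖) ^ 2 := by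
    have hstep1 : ∏ j : Fin n, ‖x j‖ ^ 2 ≤ ∏ j : Fin n, (β ^ (j:ℕ) * ‖xstar j‖ ^ 2) :=
      Finset.prod_le_prod (fun j _ => sq_nonneg _) (fun j _ => hxj j)
    have hstep2 : ∏ j : Fin n, (β ^ (j:ℕ) * ‖xstar j‖ ^ 2)
        = β ^ (∑ j : Fin n, (j:ℕ)) * ∏ j : Fin n, ‖xstar j‖ ^ 2 := by
      rw [Finset.prod_mul_distrib, Finset.prod_pow_eq_pow_sum]
    rw [← Finset.prod_pow, ← Finset.prod_pow]
    rw [hstep2] at hstep1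
    exact hstep1
  -- exponent arithmetic
  have hsumval : ((∑ j : Fin n, (j:ℕ) : ℕ) : ℝ) = (n:ℝ) * ((n:ℝ) - 1) / 2 := by
    have h2 : (∑ j : Fin n, (j:ℕ)) * 2 = n * (n - 1) := by
      rw [Fin.sum_univ_eq_sum_range (fun m => m) n]
      exact Finset.sum_range_id_mul_two n
    rcases Nat.eq_zero_or_pos n with h | h
    · subst h; simp
    · have hn1 : ((n - 1 : ℕ) : ℝ) = (n:ℝ) - 1 := by
        have : (1:ℕ) ≤ n := h
        push_cast [this]; ring
      have h3 : ((∑ j : Fin n, (j:ℕ) : ℕ) : ℝ) * 2 = (n:ℝ) * ((n - 1 : ℕ) : ℝ) := by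
        exact_mod_cast congrArg (fun m : ℕ => (m : ℝ)) h2
      rw [hn1] at h3
      linarith
  set e : ℝ := (n:ℝ) * ((n:ℝ) - 1) / 4 with hedef
  have hC0 : (0:ℝ) < β ^ e := Real.rpow_pos_of_pos hβ0 e
  have hCsq : (β ^ e) ^ 2 = β ^ (∑ j : Fin n, (j:ℕ)) := by
    rw [← Real.rpow_natCast (β ^ e) 2, ← Real.rpow_mul (le_of_lt hβ0),
      ← Real.rpow_natCast β (∑ j : Fin n, (j:ℕ))]
    congr 1
    rw [hsumval, hedef]
    push_cast
    ring
  have hfinal : ∏ j, ‖x j‖ ≤ β ^ e * ∏ j, ‖xstar j‖ := by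
    have hrhs0 : (0:ℝ) ≤ β ^ e * ∏ j, ‖xstar j‖ := mul_nonneg (le_of_lt hC0) hQ0
    have hsq : (∏ j, ‖x j‖) ^ 2 ≤ (β ^ e * ∏ j, ‖xstar j‖) ^ 2 := by
      rw [mul_pow, hCsq]
      exact hprodsq
    nlinarith
  rw [hdetabs]
  exact hfinal
end

section
/- Let x₁, …, xₙ be a basis of ℝⁿ which is α-reduced for some 1/4 < α < 1, and let L be the lattice it generates, with determinant d(L). Then ‖x₁‖ ≤ (4/(4α − 1))^{(n−1)/4} · d(L)^{1/n}. -/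
private lemma statement7_aux (β D A : ℝ) (hβ : 0 < β) (hD : 0 < D) (n k : ℕ)
    (hn : 0 < n) (hA : 0 ≤ A) (hk2 : (k : ℝ) * 2 = (n : ℝ) * ((n : ℝ) - 1))
    (hmain : A ^ (2 * n) ≤ β ^ k * D ^ 2) :
    A ≤ β ^ (((n : ℝ) - 1) / 4) * D ^ (1 / (n : ℝ)) := by
  have hn0 : (n : ℝ) ≠ 0 := Nat.cast_ne_zero.mpr hn.ne'
  refine le_of_pow_le_pow_left₀ (n := 2 * n) (by omega) (by positivity) ?_
  have hrhs : (β ^ (((n : ℝ) - 1) / 4) * D ^ (1 / (n : ℝ))) ^ (2 * n)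
      = β ^ k * D ^ 2 := by
    have e1 : (((n : ℝ) - 1) / 4) * ((2 * n : ℕ) : ℝ) = (k : ℝ) := by
      push_cast; nlinarith [hk2]
    have e2 : (1 / (n : ℝ)) * ((2 * n : ℕ) : ℝ) = ((2 : ℕ) : ℝ) := by
      push_cast; field_simp
    rw [mul_pow,
      ← Real.rpow_natCast (β ^ (((n : ℝ) - 1) / 4)) (2 * n),
      ← Real.rpow_natCast (D ^ (1 / (n : ℝ))) (2 * n),
      ← Real.rpow_mul hβ.le, ← Real.rpow_mul hD.le, e1, e2,
      Real.rpow_natCast, Real.rpow_natCast]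
  rw [hrhs]
  exact hmain

/-- Property (iii) of LLL-reduced bases: if `x₁, …, xₙ` is an α-reduced basis
of ℝⁿ generating a lattice with determinant `d(L) = |det X|` (rows `x j`), then
`‖x₁‖ ≤ (4/(4α-1))^((n-1)/4) · d(L)^(1/n)`. -/
theorem statement7 (n : ℕ) (hn : 0 < n) (α : ℝ) (hα : 1 / 4 < α) (hα1 : α < 1)
    (x : Fin n → EuclideanSpace ℝ (Fin n))
    (hx_indep : LinearIndependent ℝ x)
    (hx_span : Submodule.span ℝ (Set.range x) = ⊤)
    (xstar : Fin n → EuclideanSpace ℝ (Fin n))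
    (μ : Fin n → Fin n → ℝ)
    (hμ : ∀ j k : Fin n, μ j k = (inner ℝ (x j) (xstar k) : ℝ) / ‖xstar k‖ ^ 2)
    (hgs : ∀ j : Fin n,
      xstar j = x j - ∑ k ∈ Finset.univ.filter (· < j), μ j k • xstar k)
    (hred1 : ∀ j k : Fin n, k < j → |μ j k| ≤ 1 / 2)
    (hred2 : ∀ i j : Fin n, (i : ℕ) + 1 = (j : ℕ) →
      α * ‖xstar i‖ ^ 2 ≤ ‖xstar j + μ j i • xstar i‖ ^ 2) :
    ‖x ⟨0, hn⟩‖ ≤ (4 / (4 * α - 1)) ^ (((n : ℝ) - 1) / 4) *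
      |(Matrix.of fun j i => x j i).det| ^ (1 / (n : ℝ)) := by
  classical
  haveI : WellFoundedLT (Fin n) := inferInstance
  have hα4 : (0:ℝ) < 4 * α - 1 := by linarith
  set β : ℝ := 4 / (4 * α - 1) with hβdef
  have hβpos : 0 < β := by positivity
  -- Step 1: xstar coincides with mathlib's gramSchmidt
  have key : ∀ m : ℕ, ∀ h : m < n, xstar ⟨m, h⟩ = InnerProductSpace.gramSchmidt ℝ x ⟨m, h⟩ := by
    intro m
    induction m using Nat.strong_induction_on with
    | _ m ih =>
      intro h
      have hIio : Finset.univ.filter (· < (⟨m, h⟩ : Fin n)) = Finset.Iio ⟨m, h⟩ := by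
        ext k; simp
      rw [hgs, hIio, InnerProductSpace.gramSchmidt_def ℝ x]
      congr 1
      simp_rw [Submodule.starProjection_singleton]
      refine Finset.sum_congr rfl fun k hk => ?_
      have hkj : k < (⟨m, h⟩ : Fin n) := Finset.mem_Iio.mp hk
      have hks : xstar k = InnerProductSpace.gramSchmidt ℝ x k := by
        have := ih k.1 hkj k.2
        simpa using this
      rw [hks, hμ, hks, real_inner_comm]
      norm_num
  have hxs : ∀ j : Fin n, xstar j = InnerProductSpace.gramSchmidt ℝ x j := fun j => by
    have := key j.1 j.2; simpa using this
  -- orthogonality and nonvanishing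
  have hortho : ∀ j k : Fin n, j ≠ k → (inner ℝ (xstar j) (xstar k) : ℝ) = 0 := by
    intro j k hjk
    rw [hxs j, hxs k]
    exact InnerProductSpace.gramSchmidt_orthogonal ℝ x hjk
  have hne : ∀ j : Fin n, xstar j ≠ 0 := fun j => by
    rw [hxs j]; exact InnerProductSpace.gramSchmidt_ne_zero j hx_indep
  have hnpos : ∀ j : Fin n, 0 < ‖xstar j‖ := fun j => norm_pos_iff.mpr (hne j)
  -- x₀ = xstar₀
  have h0 : xstar ⟨0, hn⟩ = x ⟨0, hn⟩ := by
    have hempty : Finset.univ.filter (· < (⟨0, hn⟩ : Fin n)) = ∅ := by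
      ext k; simp [Fin.lt_def]
    rw [hgs, hempty, Finset.sum_empty, sub_zero]
  -- Step 2: norm decrement
  have hdec : ∀ i j : Fin n, (i : ℕ) + 1 = (j : ℕ) →
      ‖xstar i‖ ^ 2 ≤ β * ‖xstar j‖ ^ 2 := by
    intro i j hij
    have hlt : i < j := by rw [Fin.lt_def]; omega
    have hne' : j ≠ i := fun e => by rw [e] at hij; omega
    have horth : (inner ℝ (xstar j) (xstar i) : ℝ) = 0 := hortho _ _ hne'
    have hexp : ‖xstar j + μ j i • xstar i‖ ^ 2
        = ‖xstar j‖ ^ 2 + (μ j i) ^ 2 * ‖xstar i‖ ^ 2 := by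
      rw [norm_add_sq_real, real_inner_smul_right, horth, norm_smul,
        Real.norm_eq_abs, mul_pow, sq_abs]
      ring
    have hμ2 : (μ j i) ^ 2 ≤ 1 / 4 := by
      have h1 := hred1 j i hlt
      have h2 := abs_nonneg (μ j i)
      nlinarith [sq_abs (μ j i)]
    have h2 := hred2 i j hij
    rw [hexp] at h2
    have h4 : (4 * α - 1) * ‖xstar i‖ ^ 2 ≤ 4 * ‖xstar j‖ ^ 2 := by
      nlinarith [sq_nonneg ‖xstar i‖]
    calc ‖xstar i‖ ^ 2 = ((4 * α - 1) * ‖xstar i‖ ^ 2) / (4 * α - 1) := by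
          field_simp
      _ ≤ (4 * ‖xstar j‖ ^ 2) / (4 * α - 1) := by gcongr
      _ = β * ‖xstar j‖ ^ 2 := by rw [hβdef]; ring
  -- Step 3: chain
  have hchain : ∀ m : ℕ, ∀ h : m < n,
      ‖xstar ⟨0, hn⟩‖ ^ 2 ≤ β ^ m * ‖xstar ⟨m, h⟩‖ ^ 2 := by
    intro m
    induction m with
    | zero => intro h; simp
    | succ m ih =>
      intro h
      have hm : m < n := Nat.lt_of_succ_lt h
      have hstep := hdec ⟨m, hm⟩ ⟨m + 1, h⟩ rfl
      calc ‖xstar ⟨0, hn⟩‖ ^ 2 ≤ β ^ m * ‖xstar ⟨m, hm⟩‖ ^ 2 := ih hm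
        _ ≤ β ^ m * (β * ‖xstar ⟨m + 1, h⟩‖ ^ 2) := by
            have := pow_nonneg hβpos.le m
            nlinarith
        _ = β ^ (m + 1) * ‖xstar ⟨m + 1, h⟩‖ ^ 2 := by ring
  have hchainF : ∀ j : Fin n, ‖xstar ⟨0, hn⟩‖ ^ 2 ≤ β ^ (j : ℕ) * ‖xstar j‖ ^ 2 :=
    fun j => by have := hchain j.1 j.2; simpa using this
  -- Step 4: determinant
  set X : Matrix (Fin n) (Fin n) ℝ := Matrix.of fun j i => x j i with hX
  set S : Matrix (Fin n) (Fin n) ℝ := Matrix.of fun j i => xstar j i with hS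
  set M : Matrix (Fin n) (Fin n) ℝ :=
    Matrix.of fun j k => if j = k then 1 else if k < j then μ j k else 0 with hM
  have hXMS : X = M * S := by
    ext j i
    have hgj := congrArg (fun v => v i) (hgs j)
    have hterm : ∀ k : Fin n, M j k * S k i
        = (if k = j then xstar j i else 0)
          + (if k < j then μ j k * xstar k i else 0) := by
      intro k
      by_cases h1 : k = j
      · subst h1
        simp [hM, hS, lt_irrefl]
      · by_cases h2 : k < j <;> simp [hM, hS, h1, Ne.symm h1, h2]
    have : (M * S) j i = xstar j i
        + ∑ k ∈ Finset.univ.filter (· < j), μ j k * xstar k i := by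
      rw [Matrix.mul_apply]
      rw [Finset.sum_congr rfl fun k _ => hterm k, Finset.sum_add_distrib,
        Finset.sum_ite_eq' Finset.univ j fun _ => xstar j i,
        ← Finset.sum_filter]
      simp
    rw [this]
    have hsum : (∑ k ∈ Finset.univ.filter (· < j), μ j k • xstar k) i
        = ∑ k ∈ Finset.univ.filter (· < j), μ j k * xstar k i := by
      rw [WithLp.ofLp_sum, Finset.sum_apply]
      exact Finset.sum_congr rfl fun k _ => rfl
    have : xstar j i = x j i - ∑ k ∈ Finset.univ.filter (· < j), μ j k * xstar k i := by
      rw [hgj]; rw [← hsum]; rfl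
    simp [hX, this]
  have hMtri : M.BlockTriangular OrderDual.toDual := by
    intro i j hij
    have h1 : i < j := hij
    have h2 : ¬ i = j := ne_of_lt h1
    have h3 : ¬ j < i := not_lt_of_gt h1
    simp [hM, h2, h3]
  have hdetM : M.det = 1 := by
    rw [Matrix.det_of_lowerTriangular M hMtri]
    simp [hM]
  have hSST : S * S.transpose = Matrix.diagonal fun j => ‖xstar j‖ ^ 2 := by
    ext j k
    have hinner : (inner ℝ (xstar j) (xstar k) : ℝ) = ∑ i, xstar j i * xstar k i := by
      rw [PiLp.inner_apply]
      simp [RCLike.inner_apply, mul_comm]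
    by_cases hjk : j = k
    · subst hjk
      rw [Matrix.mul_apply, Matrix.diagonal_apply_eq]
      rw [← real_inner_self_eq_norm_sq, hinner]
      rfl
    · rw [Matrix.mul_apply, Matrix.diagonal_apply_ne _ hjk]
      rw [← hortho j k hjk, hinner]
      rfl
  have hdet2 : X.det ^ 2 = ∏ j, ‖xstar j‖ ^ 2 := by
    have h1 : X.det = S.det := by rw [hXMS, Matrix.det_mul, hdetM, one_mul]
    have h2 : S.det ^ 2 = (S * S.transpose).det := by
      rw [Matrix.det_mul, Matrix.det_transpose, sq]
    rw [h1, h2, hSST, Matrix.det_diagonal]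
  set D : ℝ := |X.det| with hD
  have hD2 : D ^ 2 = ∏ j, ‖xstar j‖ ^ 2 := by rw [hD, sq_abs, hdet2]
  have hDpos : 0 < D := by
    have h1 : (0:ℝ) < ∏ j, ‖xstar j‖ ^ 2 :=
      Finset.prod_pos fun j _ => pow_pos (hnpos j) 2
    have h2 := abs_nonneg X.det
    nlinarith
  -- Step 5: main inequality in integer powers
  set k : ℕ := ∑ j ∈ Finset.range n, j with hk
  have hmain : ‖x ⟨0, hn⟩‖ ^ (2 * n) ≤ β ^ k * D ^ 2 := by
    have e1 : ‖x ⟨0, hn⟩‖ ^ (2 * n) = ∏ _j : Fin n, ‖xstar ⟨0, hn⟩‖ ^ 2 := by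
      rw [h0, Finset.prod_const, Finset.card_univ, Fintype.card_fin, ← pow_mul]
    rw [e1]
    calc (∏ _j : Fin n, ‖xstar ⟨0, hn⟩‖ ^ 2)
        ≤ ∏ j : Fin n, β ^ (j : ℕ) * ‖xstar j‖ ^ 2 :=
          Finset.prod_le_prod (fun j _ => by positivity) fun j _ => hchainF j
      _ = (∏ j : Fin n, β ^ (j : ℕ)) * ∏ j, ‖xstar j‖ ^ 2 := Finset.prod_mul_distrib
      _ = β ^ k * D ^ 2 := by
          rw [← hD2, Finset.prod_pow_eq_pow_sum, hk, ← Fin.sum_univ_eq_sum_range]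
  -- Step 6
  have hk2 : (k : ℝ) * 2 = (n : ℝ) * ((n : ℝ) - 1) := by
    have h1 : k * 2 = n * (n - 1) := Finset.sum_range_id_mul_two n
    have h2 : ((k * 2 : ℕ) : ℝ) = ((n * (n - 1) : ℕ) : ℝ) := by rw [h1]
    rwa [Nat.cast_mul, Nat.cast_mul, Nat.cast_sub hn, Nat.cast_two, Nat.cast_one] at h2
  exact statement7_aux β D _ hβpos hDpos n k hn (norm_nonneg _) hk2 hmain
end

section
/- Given rational numbers x₁, x₂, …, xₙ and a rational number δ with 0 < δ < 1, there exist a positive integer b and integers a₁, …, aₙ such that |x_j − a_j/b| ≤ δ/b for every j = 1, …, n, and 1 ≤ b ≤ 2^{n(n+1)/4} · δ^{−n}. -/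
lemma simul_dirichlet (n N : ℕ) (hN : 0 < N) (x : Fin n → ℚ) :
    ∃ b : ℤ, 1 ≤ b ∧ b ≤ (N : ℤ) ^ n ∧
      ∀ j, ∃ a : ℤ, |(b : ℚ) * x j - a| < 1 / N := by
  have hNQ : (0 : ℚ) < N := by exact_mod_cast hN
  have hbound : ∀ (m : ℕ) (j : Fin n), (⌊Int.fract ((m : ℚ) * x j) * N⌋).toNat < N := by
    intro m j
    have h1 : Int.fract ((m : ℚ) * x j) < 1 := Int.fract_lt_one _
    have h : ⌊Int.fract ((m : ℚ) * x j) * N⌋ < (N : ℤ) := by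
      apply Int.floor_lt.mpr
      push_cast
      exact mul_lt_of_lt_one_left hNQ h1
    omega
  set f : Fin (N ^ n + 1) → Fin n → Fin N := fun m j =>
    ⟨(⌊Int.fract ((m : ℚ) * x j) * N⌋).toNat, hbound m j⟩ with hf
  have key : ∀ m₁ m₂ : Fin (N ^ n + 1), m₁ < m₂ → f m₁ = f m₂ →
      ∃ b : ℤ, 1 ≤ b ∧ b ≤ (N : ℤ) ^ n ∧
        ∀ j, ∃ a : ℤ, |(b : ℚ) * x j - a| < 1 / N := by
    intro m₁ m₂ hlt heq
    refine ⟨(m₂ : ℤ) - (m₁ : ℤ), by have : (m₁ : ℕ) < (m₂ : ℕ) := hlt; omega, ?_, ?_⟩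
    · have h2 : (m₂ : ℕ) ≤ N ^ n := by omega
      have h1 : 0 ≤ ((m₁ : ℕ) : ℤ) := Int.natCast_nonneg _
      have : ((m₂ : ℕ) : ℤ) ≤ (N : ℤ) ^ n := by exact_mod_cast h2
      omega
    · intro j
      have hj := congrFun heq j
      simp only [hf, Fin.mk.injEq] at hj
      have hfl : ⌊Int.fract (((m₁ : ℕ) : ℚ) * x j) * N⌋ =
          ⌊Int.fract (((m₂ : ℕ) : ℚ) * x j) * N⌋ := by
        have h1 : 0 ≤ ⌊Int.fract (((m₁ : ℕ) : ℚ) * x j) * N⌋ :=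
          Int.floor_nonneg.mpr (mul_nonneg (Int.fract_nonneg _) hNQ.le)
        have h2 : 0 ≤ ⌊Int.fract (((m₂ : ℕ) : ℚ) * x j) * N⌋ :=
          Int.floor_nonneg.mpr (mul_nonneg (Int.fract_nonneg _) hNQ.le)
        omega
      have habs := Int.abs_sub_lt_one_of_floor_eq_floor hfl
      refine ⟨⌊((m₂ : ℕ) : ℚ) * x j⌋ - ⌊((m₁ : ℕ) : ℚ) * x j⌋, ?_⟩
      have hrw : (((m₂ : ℕ) : ℚ) - ((m₁ : ℕ) : ℚ)) * x j
            - ((⌊((m₂ : ℕ) : ℚ) * x j⌋ : ℚ) - (⌊((m₁ : ℕ) : ℚ) * x j⌋ : ℚ))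
          = Int.fract (((m₂ : ℕ) : ℚ) * x j) - Int.fract (((m₁ : ℕ) : ℚ) * x j) := by
        simp only [Int.fract]
        push_cast
        ring
      push_cast
      rw [hrw, lt_div_iff₀ hNQ, ← abs_of_pos hNQ, ← abs_mul]
      rw [sub_mul, abs_sub_comm]
      exact habs
  have hcard : Fintype.card (Fin n → Fin N) < Fintype.card (Fin (N ^ n + 1)) := by simp
  obtain ⟨m₁, m₂, hne, heq⟩ := Fintype.exists_ne_map_eq_of_card_lt f hcard
  rcases hne.lt_or_gt with h | h
  · exact key _ _ h heq
  · exact key _ _ h heq.symm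


lemma three_half_le : (3:ℝ)/2 ≤ (2:ℝ) ^ ((3:ℝ)/4) := by
  have h4 : ((3:ℝ)/2) ^ (4:ℕ) ≤ ((2:ℝ) ^ ((3:ℝ)/4)) ^ (4:ℕ) := by
    rw [← Real.rpow_natCast ((2:ℝ) ^ ((3:ℝ)/4)) 4, ← Real.rpow_mul (by norm_num)]
    rw [show (3:ℝ)/4 * ((4:ℕ):ℝ) = ((3:ℕ):ℝ) by norm_num, Real.rpow_natCast]
    norm_num
  exact le_of_pow_le_pow_left₀ (by norm_num) (by positivity) h4

lemma rpow_neg_nat (δ : ℝ) (hδ : 0 < δ) (n : ℕ) : δ ^ (-(n:ℝ)) = (δ⁻¹) ^ n := by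
  rw [Real.rpow_neg hδ.le, Real.rpow_natCast, inv_pow]

/-- The LLL simultaneous Diophantine approximation theorem (existence part):
given rationals `x₁, …, xₙ` and `0 < δ < 1`, there are `b ∈ ℕ`, `a₁, …, aₙ ∈ ℤ`
with `|x j - a j / b| ≤ δ / b` for all `j` and `1 ≤ b ≤ 2^(n(n+1)/4) δ^(-n)`. -/
theorem statement8 (n : ℕ) (x : Fin n → ℚ) (δ : ℚ) (hδ0 : 0 < δ) (hδ1 : δ < 1) :
    ∃ (b : ℤ) (a : Fin n → ℤ), 1 ≤ b ∧
      (b : ℝ) ≤ 2 ^ ((n : ℝ) * ((n : ℝ) + 1) / 4) * (δ : ℝ) ^ (-(n : ℝ)) ∧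
      ∀ j : Fin n, |(x j : ℝ) - (a j : ℝ) / (b : ℝ)| ≤ (δ : ℝ) / (b : ℝ) := by
  have hδR : (0:ℝ) < (δ:ℝ) := by exact_mod_cast hδ0
  have hδR1 : (δ:ℝ) ≤ 1 := by exact_mod_cast hδ1.le
  by_cases hhalf : 1/2 ≤ δ
  · -- rounding with b = 1
    refine ⟨1, fun j => round (x j), le_refl _, ?_, ?_⟩
    · have h1 : (1:ℝ) ≤ 2 ^ ((n : ℝ) * ((n : ℝ) + 1) / 4) :=
        Real.one_le_rpow one_le_two (by positivity)
      have h2 : (1:ℝ) ≤ (δ:ℝ) ^ (-(n:ℝ)) := by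
        rw [Real.rpow_neg hδR.le, Real.rpow_natCast]
        exact one_le_inv_iff₀.mpr ⟨pow_pos hδR n, pow_le_one₀ hδR.le hδR1⟩
      push_cast
      nlinarith
    · intro j
      have h := abs_sub_round (x j)
      have : |x j - ((round (x j) : ℤ) : ℚ)| ≤ δ := h.trans hhalf
      have hR : |(x j : ℝ) - ((round (x j) : ℤ) : ℝ)| ≤ (δ:ℝ) := by exact_mod_cast this
      push_cast
      simpa using hR
  · push_neg at hhalf
    -- δ < 1/2
    match n, x with
    | 0, x =>
      refine ⟨1, Fin.elim0, le_refl _, ?_, fun j => j.elim0⟩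
      norm_num
    | 1, x =>
      have hr : (2:ℚ) < 1/δ := by rw [lt_div_iff₀ hδ0]; linarith
      have hr0 : (0:ℚ) ≤ 1/δ := by positivity
      have hm : 1 ≤ ⌈(1/δ : ℚ)⌉₊ - 1 := by
        have : (2:ℕ) < ⌈(1/δ : ℚ)⌉₊ := Nat.lt_ceil.mpr (by exact_mod_cast hr)
        omega
      set m : ℕ := ⌈(1/δ : ℚ)⌉₊ - 1 with hmdef
      obtain ⟨j, k, hk0, hkm, habs⟩ :=
        Real.exists_int_int_abs_mul_sub_le ((x 0 : ℝ)) (by omega : 0 < m)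
      have hm1 : (m : ℕ) + 1 = ⌈(1/δ : ℚ)⌉₊ := by omega
      have hceil : (1/δ : ℚ) ≤ (⌈(1/δ : ℚ)⌉₊ : ℚ) := Nat.le_ceil _
      have hsmall : 1 / ((m:ℝ) + 1) ≤ (δ:ℝ) := by
        rw [div_le_iff₀ (by positivity)]
        have : (1/δ : ℚ) ≤ ((m:ℚ) + 1) := by
          rw [show ((m:ℚ) + 1) = ((m + 1 : ℕ) : ℚ) by push_cast; ring, hm1]
          exact hceil
        have hQ : 1 ≤ δ * ((m:ℚ) + 1) := by
          rw [div_le_iff₀ hδ0] at this; linarith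
        exact_mod_cast hQ
      have habs' : |(k:ℝ) * (x 0 : ℝ) - (j:ℝ)| ≤ (δ:ℝ) := habs.trans hsmall
      have hkR : (0:ℝ) < (k:ℝ) := by exact_mod_cast hk0
      refine ⟨k, fun _ => j, hk0, ?_, ?_⟩
      · -- k ≤ m < 1/δ ≤ 2^(1/2) / δ
        have h1 : (k:ℝ) ≤ (m:ℝ) := by exact_mod_cast hkm
        have h2 : (m:ℝ) < (1/δ : ℚ) := by
          have : (m:ℚ) < 1/δ := by
            have := Nat.ceil_lt_add_one hr0
            have hmQ : (m:ℚ) = (⌈(1/δ : ℚ)⌉₊ : ℚ) - 1 := by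
              rw [hmdef]; push_cast [Nat.cast_sub (by omega : 1 ≤ ⌈(1/δ : ℚ)⌉₊)]; ring
            linarith
          exact_mod_cast this
        have h3 : ((1/δ : ℚ) : ℝ) = (δ:ℝ)⁻¹ := by push_cast; ring
        have h4 : (1:ℝ) ≤ 2 ^ (((1:ℕ) : ℝ) * (((1:ℕ) : ℝ) + 1) / 4) :=
          Real.one_le_rpow one_le_two (by norm_num)
        have h5 : (δ:ℝ) ^ (-((1:ℕ):ℝ)) = (δ:ℝ)⁻¹ := by
          rw [rpow_neg_nat _ hδR]; norm_num
        rw [h5]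
        have : (k:ℝ) ≤ (δ:ℝ)⁻¹ := by rw [← h3]; linarith
        nlinarith [inv_pos.mpr hδR]
      · intro i
        have : |(x 0 : ℝ) - (j:ℝ) / (k:ℝ)| ≤ (δ:ℝ) / (k:ℝ) := by
          rw [show (x 0 : ℝ) - (j:ℝ)/(k:ℝ) = ((k:ℝ) * (x 0 : ℝ) - (j:ℝ))/(k:ℝ) by
            rw [sub_div, mul_div_cancel_left₀ _ (ne_of_gt hkR)], abs_div, abs_of_pos hkR]
          gcongr
        have h0 : i = 0 := Fin.fin_one_eq_zero i
        rw [h0]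
        exact this
    | (m + 2), x =>
      have hn : (2:ℕ) ≤ m + 2 := by omega
      set N : ℕ := ⌈(1/δ : ℚ)⌉₊ with hNdef
      have hN : 0 < N := Nat.ceil_pos.mpr (by positivity)
      obtain ⟨b, hb1, hbN, hap⟩ := simul_dirichlet (m + 2) N hN x
      have hNQ : (0:ℚ) < (N:ℚ) := by exact_mod_cast hN
      have hceil : (1/δ : ℚ) ≤ (N:ℚ) := Nat.le_ceil _
      have hsmall : (1:ℚ) / (N:ℚ) ≤ δ := by
        rw [div_le_iff₀ hNQ]
        rw [div_le_iff₀ hδ0] at hceil; linarith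
      choose a ha using hap
      have hbQ : (0:ℚ) < (b:ℚ) := by exact_mod_cast hb1
      refine ⟨b, a, hb1, ?_, ?_⟩
      · have h1 : (b:ℝ) ≤ (N:ℝ) ^ (m + 2) := by exact_mod_cast hbN
        have h2 : (N:ℝ) ≤ (3/2) * (δ:ℝ)⁻¹ := by
          have hc2 : (N:ℚ) < 1/δ + 1 := Nat.ceil_lt_add_one (by positivity)
          have hr : (2:ℚ) < 1/δ := by rw [lt_div_iff₀ hδ0]; linarith
          have hQ : (N:ℚ) ≤ (3/2) * (1/δ) := by linarith
          have hR : ((N:ℚ):ℝ) ≤ (((3/2) * (1/δ) : ℚ) : ℝ) := by exact_mod_cast hQ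
          push_cast at hR
          rw [one_div] at hR
          exact_mod_cast hR
        have h3 : (N:ℝ) ^ (m+2) ≤ ((3/2) * (δ:ℝ)⁻¹) ^ (m+2) :=
          pow_le_pow_left₀ (by positivity) h2 _
        have h4 : ((3/2) * (δ:ℝ)⁻¹) ^ (m+2) = (3/2:ℝ)^(m+2) * ((δ:ℝ)⁻¹)^(m+2) := mul_pow _ _ _
        have h5 : ((3:ℝ)/2)^(m+2) ≤ 2 ^ (((m+2:ℕ) : ℝ) * (((m+2:ℕ) : ℝ) + 1) / 4) := by
          calc ((3:ℝ)/2)^(m+2) ≤ ((2:ℝ) ^ ((3:ℝ)/4))^(m+2) :=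
              pow_le_pow_left₀ (by norm_num) three_half_le _
            _ = (2:ℝ) ^ ((3:ℝ)/4 * ((m+2:ℕ):ℝ)) := by
                rw [← Real.rpow_natCast ((2:ℝ) ^ ((3:ℝ)/4)) (m+2), ← Real.rpow_mul (by norm_num)]
            _ ≤ 2 ^ (((m+2:ℕ) : ℝ) * (((m+2:ℕ) : ℝ) + 1) / 4) := by
                apply Real.rpow_le_rpow_of_exponent_le one_le_two
                have hn2 : (2:ℝ) ≤ ((m+2:ℕ):ℝ) := by exact_mod_cast hn
                nlinarith
        rw [rpow_neg_nat _ hδR]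
        calc (b:ℝ) ≤ (N:ℝ)^(m+2) := h1
          _ ≤ (3/2:ℝ)^(m+2) * ((δ:ℝ)⁻¹)^(m+2) := by rw [← h4]; exact h3
          _ ≤ 2 ^ (((m+2:ℕ) : ℝ) * (((m+2:ℕ) : ℝ) + 1) / 4) * ((δ:ℝ)⁻¹)^(m+2) :=
              mul_le_mul_of_nonneg_right h5 (by positivity)
      · intro i
        have hQ : |x i - (a i : ℚ) / (b:ℚ)| ≤ δ / (b:ℚ) := by
          rw [show x i - (a i : ℚ)/(b:ℚ) = ((b:ℚ) * x i - (a i : ℚ))/(b:ℚ) by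
            rw [sub_div, mul_div_cancel_left₀ _ (ne_of_gt hbQ)], abs_div, abs_of_pos hbQ]
          gcongr
          exact ((ha i).trans_le hsmall).le
        exact_mod_cast hQ
end

section
/- For every ε > 0 there exists a nonlattice Dirichlet polynomial of the form f(s) = 1 − m₁ rˢ − m₂ r^{α₂ s} − ⋯ − m_{N−1} r^{α_{N−1} s} − r^{α_N s}, with 0 < r < 1, m₁, …, m_{N−1} > 0 and 1 = α₁ < α₂ < ⋯ < α_N (with some α_j irrational), whose LSA constant C satisfies 0 < (32π)^{−1} − C < ε. In other words, the LSA constant of Dirichlet polynomials of this form can be made arbitrarily close to, but strictly less than, 1/(32π). -/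
open Real

noncomputable def myf (t : ℝ) : ℝ := (1 + t) / (2 * π) * (2 + t) ^ (-(2 * (2 + t)))

lemma myf_cont : ContinuousAt myf 0 := by
  unfold myf
  apply ContinuousAt.mul (by fun_prop)
  apply ContinuousAt.rpow (by fun_prop) (by fun_prop)
  left; norm_num

lemma myf_zero : myf 0 = 1 / (32 * π) := by
  unfold myf
  rw [show (-(2 * (2 + (0:ℝ)))) = ((-4 : ℤ) : ℝ) by norm_num, Real.rpow_intCast]
  rw [show ((2:ℝ) + 0) = 2 by norm_num]
  norm_num
  ring

lemma myf_lt (t : ℝ) (ht : 0 < t) : myf t < 1 / (32 * π) := by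
  unfold myf
  have hb : (1:ℝ) < 2 + t := by linarith
  have h1 : (2 + t) ^ (-(2 * (2 + t))) < (2 + t) ^ ((-4:ℝ)) :=
    (Real.rpow_lt_rpow_left_iff hb).mpr (by linarith)
  have h2 : (2 + t) ^ ((-4:ℝ)) = 1 / (2 + t) ^ (4:ℕ) := by
    rw [show ((-4:ℝ)) = -((4:ℕ):ℝ) by norm_num, Real.rpow_neg (by linarith),
      Real.rpow_natCast, one_div]
  have hπ : 0 < π := Real.pi_pos
  have hpos : 0 < (1 + t) / (2 * π) := by positivity
  calc (1 + t) / (2 * π) * (2 + t) ^ (-(2 * (2 + t)))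
      < (1 + t) / (2 * π) * (1 / (2 + t) ^ (4:ℕ)) := by
        rw [← h2]; exact mul_lt_mul_of_pos_left h1 hpos
    _ < 1 / (32 * π) := by
        rw [div_mul_div_comm, div_lt_div_iff₀ (by positivity) (by positivity)]
        have key : 32 * (1 + t) < 2 * (2 + t) ^ 4 := by nlinarith [sq_nonneg t, sq_nonneg (t*t)]
        nlinarith [mul_lt_mul_of_pos_left key hπ]



/-- The LSA constant of nonlattice Dirichlet polynomials of the special form
`f(s) = 1 - m₁ rˢ - ⋯ - m_{N-1} r^(α_{N-1} s) - r^(α_N s)` can be made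
arbitrarily close to, but strictly less than, `1/(32π)`: for every `ε > 0`
there is such a polynomial whose LSA constant `C` (computed from the general
formula with weights `w j = -log (r^(α j))`) satisfies
`0 < 1/(32π) - C < ε`.  (Indices shifted to `Fin N`.) -/
theorem statement11 : ∀ ε : ℝ, 0 < ε →
    ∃ (N : ℕ) (hN : 2 ≤ N) (r : ℝ) (m α : Fin N → ℝ),
      0 < r ∧ r < 1 ∧
      m ⟨N - 1, by omega⟩ = 1 ∧
      (∀ j : Fin N, j ≠ ⟨N - 1, by omega⟩ → 0 < m j) ∧
      α ⟨0, by omega⟩ = 1 ∧ StrictMono α ∧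
      (∃ j : Fin N, Irrational (α j)) ∧
      ∃ C : ℝ,
        C = 1 / (2 * Real.pi) * (∑ j, |m j|) *
          (((1 + ∑ j, |m j|) / min 1 |m ⟨N - 1, by omega⟩|) ^
            (-2 * (-Real.log (r ^ α ⟨N - 1, by omega⟩)) /
              min (-Real.log (r ^ α ⟨0, by omega⟩))
                ((-Real.log (r ^ α ⟨N - 1, by omega⟩)) -
                  (-Real.log (r ^ α ⟨N - 2, by omega⟩))))) ∧
        0 < 1 / (32 * Real.pi) - C ∧ 1 / (32 * Real.pi) - C < ε := by
  intro ε hε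
  obtain ⟨δ, hδ, hcont⟩ := Metric.continuousAt_iff.mp myf_cont ε hε
  obtain ⟨n, hn⟩ := exists_nat_gt (2 / δ)
  have hn0 : (0:ℝ) < n := lt_of_le_of_lt (by positivity) hn
  have hnne : n ≠ 0 := by exact_mod_cast hn0.ne'
  set t : ℝ := Real.sqrt 2 / n with hT
  have hs2 : (0:ℝ) < Real.sqrt 2 := by positivity
  have ht : 0 < t := by positivity
  have hsqrt : Real.sqrt 2 < 2 := by
    nlinarith [Real.sq_sqrt (by norm_num : (0:ℝ) ≤ 2), Real.sqrt_nonneg 2]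
  have htδ : t < δ := by
    have h1 : t < 2 / n := by rw [hT]; gcongr
    have h2 : 2 / (n:ℝ) < δ := by
      rw [div_lt_iff₀ hn0]
      have := (div_lt_iff₀ hδ).mp hn
      nlinarith
    linarith
  have htirr : Irrational t := irrational_sqrt_two.div_natCast hnne
  have hαirr : Irrational (2 + t) := by simpa using htirr.natCast_add 2
  refine ⟨2, by norm_num, 1/2, ![t, 1], ![1, 2 + t], by norm_num, by norm_num, ?_, ?_, ?_, ?_, ?_, ?_⟩
  · simp
  · intro j hj
    fin_cases j
    · simpa using ht
    · simp at hj
  · simp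
  · intro a b hab
    fin_cases a <;> fin_cases b <;> simp_all <;> linarith [div_pos (show (0:ℝ) < √2 by positivity) (show (0:ℝ) < (n:ℝ) from Nat.cast_pos.mpr (by omega))]
  · exact ⟨1, by simpa using hαirr⟩
  · refine ⟨myf t, ?_, ?_, ?_⟩
    · have hlog2 : (0:ℝ) < Real.log 2 := Real.log_pos (by norm_num)
      have hhalf : (0:ℝ) < 1/2 := by norm_num
      have hl : Real.log (1/2 : ℝ) = -Real.log 2 := by
        rw [one_div, Real.log_inv]
      rw [Fin.sum_univ_two]
      simp only [Matrix.cons_val_zero, Matrix.cons_val_one, Matrix.head_cons, Fin.mk_one]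
      rw [abs_of_pos ht, abs_one]
      rw [Real.log_rpow hhalf, Real.log_rpow hhalf]
      simp only [show ((⟨2-1, by omega⟩ : Fin 2)) = 1 from rfl,
        show ((⟨0, by omega⟩ : Fin 2)) = 0 from rfl, Matrix.cons_val_one, Matrix.cons_val_zero,
        Matrix.head_cons, hl]
      rw [show -((1:ℝ) * -Real.log 2) = Real.log 2 by ring,
        show -((2+t) * -Real.log 2) = (2+t) * Real.log 2 by ring,
        min_eq_left (by nlinarith : Real.log 2 ≤ (2+t) * Real.log 2 - Real.log 2),
        show -2 * ((2+t) * Real.log 2) / Real.log 2 = -(2*(2+t)) by field_simp,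
        show (1:ℝ) ⊓ |(1:ℝ)| = 1 by norm_num, div_one,
        show (1 + (t+1)) = 2 + t by ring]
      unfold myf
      ring
    · have := myf_lt t ht
      linarith
    · have hd : dist t 0 < δ := by rwa [Real.dist_eq, sub_zero, abs_of_pos ht]
      have := hcont hd
      rw [Real.dist_eq, myf_zero] at this
      have hlt := myf_lt t ht
      have : |myf t - 1/(32*π)| < ε := this
      rw [abs_of_neg (by linarith)] at this
      linarith
end

section
/- Let f(s) = 1 − ∑_{j=1}^N m_j r_jˢ be a Dirichlet polynomial with 1 > r₁ > ⋯ > r_N > 0, m₁, …, m_N ∈ ℂ, and m_N ≠ 0. Let D and D_ℓ be the unique real numbers satisfying ∑_{j=1}^N |m_j| r_j^D = 1 and 1 + ∑_{j=1}^{N−1} |m_j| r_j^{D_ℓ} = |m_N| r_N^{D_ℓ}, respectively. Then every complex root s of f (i.e., every s ∈ ℂ with f(s) = 0) lies in the horizontally bounded vertical strip R = {z ∈ ℂ : D_ℓ ≤ Re z ≤ D}. -/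
/-- All complex roots of a Dirichlet polynomial
`f(s) = 1 - ∑ m j (r j)ˢ` lie in the horizontally bounded vertical strip
`{z : D_ℓ ≤ Re z ≤ D}`, where `D` and `D_ℓ` are the unique reals with
`∑ |m j| (r j)^D = 1` and `1 + ∑_{j<N} |m j| (r j)^(D_ℓ) = |m N| (r N)^(D_ℓ)`.
(Indices shifted to `Fin N`: `N - 1` plays the role of the last index `N`.) -/
theorem statement17 (N : ℕ) (hN : 1 ≤ N) (r : Fin N → ℝ)
    (hr1 : r ⟨0, by omega⟩ < 1) (hrpos : ∀ j, 0 < r j) (hanti : StrictAnti r)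
    (m : Fin N → ℂ) (hm : m ⟨N - 1, by omega⟩ ≠ 0)
    (D Dl : ℝ)
    (hD : ∑ j, ‖m j‖ * r j ^ D = 1)
    (hDl : 1 + ∑ j ∈ Finset.univ.erase (⟨N - 1, by omega⟩ : Fin N),
             ‖m j‖ * r j ^ Dl
         = ‖m ⟨N - 1, by omega⟩‖ * r ⟨N - 1, by omega⟩ ^ Dl) :
    ∀ s : ℂ, (1 - ∑ j, m j * Complex.exp (s * (Real.log (r j) : ℝ))) = 0 →
      Dl ≤ s.re ∧ s.re ≤ D := by
  intro s hf
  set L : Fin N := ⟨N - 1, by omega⟩ with hLdef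
  set x := s.re with hx
  have hrlt1 : ∀ j : Fin N, r j < 1 := by
    intro j
    have h0le : (⟨0, by omega⟩ : Fin N) ≤ j := by
      rw [Fin.le_def]; exact Nat.zero_le _
    exact lt_of_le_of_lt (hanti.antitone h0le) hr1
  have habs : ∀ j : Fin N,
      ‖m j * Complex.exp (s * (Real.log (r j) : ℝ))‖ =
        ‖m j‖ * r j ^ x := by
    intro j
    rw [norm_mul, Complex.norm_exp]
    congr 1
    have : (s * (Real.log (r j) : ℂ)).re = x * Real.log (r j) := by
      simp [Complex.mul_re, hx]
    rw [this, Real.rpow_def_of_pos (hrpos j), mul_comm]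
  have hsum : ∑ j, m j * Complex.exp (s * (Real.log (r j) : ℝ)) = 1 := by
    have := sub_eq_zero.mp hf
    exact this.symm
  -- upper bound
  have hub : (1 : ℝ) ≤ ∑ j, ‖m j‖ * r j ^ x := by
    calc (1 : ℝ) = ‖∑ j, m j * Complex.exp (s * (Real.log (r j) : ℝ))‖ := by
          rw [hsum]; simp
      _ ≤ ∑ j, ‖m j * Complex.exp (s * (Real.log (r j) : ℝ))‖ :=
          norm_sum_le _ _
      _ = ∑ j, ‖m j‖ * r j ^ x := Finset.sum_congr rfl fun j _ => habs j
  have hmLpos : 0 < ‖m L‖ := norm_pos_iff.mpr hm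
  have hxD : x ≤ D := by
    by_contra hcon
    push_neg at hcon
    have hlt : ∑ j, ‖m j‖ * r j ^ x < ∑ j, ‖m j‖ * r j ^ D := by
      apply Finset.sum_lt_sum
      · intro j _
        exact mul_le_mul_of_nonneg_left
          (Real.rpow_le_rpow_of_exponent_ge (hrpos j) (hrlt1 j).le hcon.le)
          (norm_nonneg _)
      · exact ⟨L, Finset.mem_univ _,
          mul_lt_mul_of_pos_left
            (Real.rpow_lt_rpow_of_exponent_gt (hrpos L) (hrlt1 L) hcon) hmLpos⟩
    linarith
  -- lower bound
  have hsplit := Finset.add_sum_erase Finset.univ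
    (fun j => m j * Complex.exp (s * (Real.log (r j) : ℝ))) (Finset.mem_univ L)
  have h2 : m L * Complex.exp (s * (Real.log (r L) : ℝ)) =
      1 - ∑ j ∈ Finset.univ.erase L, m j * Complex.exp (s * (Real.log (r j) : ℝ)) := by
    rw [eq_sub_iff_add_eq, hsplit, hsum]
  have key : ‖m L‖ * r L ^ x ≤
      1 + ∑ j ∈ Finset.univ.erase L, ‖m j‖ * r j ^ x := by
    calc ‖m L‖ * r L ^ x
        = ‖m L * Complex.exp (s * (Real.log (r L) : ℝ))‖ := (habs L).symm
      _ = ‖1 - ∑ j ∈ Finset.univ.erase L,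
            m j * Complex.exp (s * (Real.log (r j) : ℝ))‖ := by rw [h2]
      _ ≤ ‖(1 : ℂ)‖ + ‖∑ j ∈ Finset.univ.erase L,
            m j * Complex.exp (s * (Real.log (r j) : ℝ))‖ := by
          simpa using norm_sub_le (1 : ℂ)
            (∑ j ∈ Finset.univ.erase L, m j * Complex.exp (s * (Real.log (r j) : ℝ)))
      _ ≤ 1 + ∑ j ∈ Finset.univ.erase L, ‖m j‖ * r j ^ x := by
          rw [norm_one]
          refine add_le_add_right ?_ 1
          refine le_trans (norm_sum_le _ _) ?_
          exact le_of_eq (Finset.sum_congr rfl fun j _ => habs j)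
  have hDlx : Dl ≤ x := by
    by_contra hcon
    push_neg at hcon
    set t : ℝ := r L ^ (x - Dl) with htdef
    have ht1 : 1 < t := by
      rw [htdef]
      rw [Real.one_lt_rpow_iff_of_pos (hrpos L)]
      exact Or.inr ⟨hrlt1 L, by linarith⟩
    have hgt : 1 + ∑ j ∈ Finset.univ.erase L, ‖m j‖ * r j ^ x <
        ‖m L‖ * r L ^ x := by
      have hrLx : r L ^ x = r L ^ Dl * t := by
        rw [htdef, ← Real.rpow_add (hrpos L)]
        ring_nf
      have hterm : ∀ j ∈ Finset.univ.erase L,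
          ‖m j‖ * r j ^ x ≤ ‖m j‖ * r j ^ Dl * t := by
        intro j hj
        have hjL : j ≠ L := Finset.ne_of_mem_erase hj
        have hjltL : j < L := by
          rw [Fin.lt_def]
          have := j.isLt
          have hLval : L.val = N - 1 := rfl
          have hne : j.val ≠ N - 1 := fun h => hjL (Fin.ext (h.trans hLval.symm))
          omega
        have hrLj : r L ≤ r j := (hanti hjltL).le
        have hjt : r j ^ (x - Dl) ≤ t :=
          Real.rpow_le_rpow_of_nonpos (hrpos L) hrLj (by linarith)
        calc ‖m j‖ * r j ^ x
            = ‖m j‖ * r j ^ Dl * r j ^ (x - Dl) := by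
              rw [mul_assoc, ← Real.rpow_add (hrpos j)]; ring_nf
          _ ≤ ‖m j‖ * r j ^ Dl * t := by
              exact mul_le_mul_of_nonneg_left hjt
                (mul_nonneg (norm_nonneg _) (Real.rpow_nonneg (hrpos j).le _))
      have hsumle : ∑ j ∈ Finset.univ.erase L, ‖m j‖ * r j ^ x ≤
          (∑ j ∈ Finset.univ.erase L, ‖m j‖ * r j ^ Dl) * t := by
        rw [Finset.sum_mul]
        exact Finset.sum_le_sum hterm
      calc 1 + ∑ j ∈ Finset.univ.erase L, ‖m j‖ * r j ^ x
          ≤ 1 + (∑ j ∈ Finset.univ.erase L, ‖m j‖ * r j ^ Dl) * t := by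
            linarith
        _ < t + (∑ j ∈ Finset.univ.erase L, ‖m j‖ * r j ^ Dl) * t := by
            linarith
        _ = (1 + ∑ j ∈ Finset.univ.erase L, ‖m j‖ * r j ^ Dl) * t := by ring
        _ = ‖m L‖ * r L ^ Dl * t := by rw [hDl]
        _ = ‖m L‖ * r L ^ x := by rw [hrLx, mul_assoc]
    linarith
  exact ⟨hDlx, hxD⟩
end
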